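/- Let k and j be integers with 1 ≤ j ≤ k−1, let V be a set of n vertices, let 1 ≤ i ≤ j−1, let I ⊆ V with |I| = i, and let 𝒢 be a family of j-subsets of V. Then the number of k-subsets K of V such that I ⊆ K and there exists J' ∈ 𝒢 with J' ⊆ K and I ⊄ J' is at most Σ_{z=0}^{i−1} C(i,z)·Δ_z(𝒢)·C(n, k−j−i+z), where by convention C(n,m) = 0 whenever m < 0. -/

import Mathlib

lemma card_supersets {V : Type*} [Fintype V] [DecidableEq V] (S : Finset V) (k : ℕ) :
    ((Finset.powersetCard k (Finset.univ : Finset V)).filter fun K => S ⊆ K).card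
      ≤ (Fintype.card V).choose (k - S.card) := by
  classical
  have : ((Finset.powersetCard k (Finset.univ : Finset V)).filter fun K => S ⊆ K).card
      ≤ (Finset.powersetCard (k - S.card) (Finset.univ : Finset V)).card := by
    apply Finset.card_le_card_of_injOn (fun K => K \ S)
    · intro K hK
      simp only [Finset.mem_coe, Finset.mem_filter, Finset.mem_powersetCard] at hK ⊢
      refine ⟨Finset.subset_univ _, ?_⟩
      rw [Finset.card_sdiff_of_subset hK.2, hK.1.2]
    · intro K1 h1 K2 h2 h
      simp only [Finset.mem_coe, Finset.mem_filter, Finset.mem_powersetCard] at h1 h2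
      have e1 : K1 = (K1 \ S) ∪ S :=
        (Finset.sdiff_union_self_eq_union.trans (Finset.union_eq_left.2 h1.2)).symm
      have e2 : K2 = (K2 \ S) ∪ S :=
        (Finset.sdiff_union_self_eq_union.trans (Finset.union_eq_left.2 h2.2)).symm
      simp only [] at h; rw [e1, e2, h]
  simpa [Finset.card_powersetCard] using this

/-- `Δ_z(𝒢)`: the maximum, over all `z`-subsets `Z` of the (finite) vertex set `V`, of the
number of members of `𝒢` containing `Z`. -/
def maxDegree {V : Type*} [Fintype V] [DecidableEq V] (𝒢 : Finset (Finset V)) (z : ℕ) : ℕ :=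
  (Finset.powersetCard z (Finset.univ : Finset V)).sup fun Z =>
    (𝒢.filter fun J => Z ⊆ J).card

theorem count_jump_ksets
    (k j n i : ℕ) (hj1 : 1 ≤ j) (hjk : j + 1 ≤ k) (hi1 : 1 ≤ i) (hij : i ≤ j - 1)
    {V : Type*} [Fintype V] [DecidableEq V] (hn : Fintype.card V = n)
    (I : Finset V) (hI : I.card = i)
    (𝒢 : Finset (Finset V)) (h𝒢 : ∀ G ∈ 𝒢, G.card = j) :
    ((Finset.powersetCard k (Finset.univ : Finset V)).filter fun K =>
        I ⊆ K ∧ ∃ J' ∈ 𝒢, J' ⊆ K ∧ ¬ I ⊆ J').card ≤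
      ∑ z ∈ Finset.range i, i.choose z * maxDegree 𝒢 z *
        (if j + i ≤ k + z then n.choose (k + z - j - i) else 0) := by
  classical
  have hij' : i ≤ j := by omega
  set A := (Finset.range i).biUnion (fun z => (Finset.powersetCard z I).biUnion (fun Z =>
      (𝒢.filter (fun J' => I ∩ J' = Z)).biUnion (fun J' =>
        (Finset.powersetCard k (Finset.univ : Finset V)).filter
          (fun K => I ∪ J' ⊆ K)))) with hA
  have hsub : ((Finset.powersetCard k (Finset.univ : Finset V)).filter fun K =>
        I ⊆ K ∧ ∃ J' ∈ 𝒢, J' ⊆ K ∧ ¬ I ⊆ J') ⊆ A := by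
    intro K hK
    simp only [Finset.mem_filter, Finset.mem_powersetCard] at hK
    obtain ⟨⟨hKu, hKc⟩, hIK, J', hJ𝒢, hJK, hIJ⟩ := hK
    have hZI : I ∩ J' ⊆ I := Finset.inter_subset_left
    have hZlt : (I ∩ J').card < i := by
      rw [← hI]
      apply Finset.card_lt_card
      refine ⟨hZI, fun hc => hIJ ?_⟩
      exact fun x hx => (Finset.mem_inter.1 (hc hx)).2
    rw [hA]
    simp only [Finset.mem_biUnion, Finset.mem_range, Finset.mem_powersetCard,
      Finset.mem_filter]
    exact ⟨(I ∩ J').card, hZlt, I ∩ J', ⟨hZI, rfl⟩, J', ⟨hJ𝒢, rfl⟩,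
      ⟨⟨hKu, hKc⟩, Finset.union_subset hIK hJK⟩⟩
  refine le_trans (Finset.card_le_card hsub) ?_
  refine le_trans (Finset.card_biUnion_le) (Finset.sum_le_sum fun z hz => ?_)
  rw [Finset.mem_range] at hz
  refine le_trans (Finset.card_biUnion_le) ?_
  have hZbound : ∀ Z ∈ Finset.powersetCard z I,
      ((𝒢.filter (fun J' => I ∩ J' = Z)).biUnion (fun J' =>
        (Finset.powersetCard k (Finset.univ : Finset V)).filter
          (fun K => I ∪ J' ⊆ K))).card ≤
      maxDegree 𝒢 z * (if j + i ≤ k + z then n.choose (k + z - j - i) else 0) := by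
    intro Z hZ
    rw [Finset.mem_powersetCard] at hZ
    refine le_trans (Finset.card_biUnion_le) ?_
    have hinner : ∀ J' ∈ 𝒢.filter (fun J' => I ∩ J' = Z),
        ((Finset.powersetCard k (Finset.univ : Finset V)).filter
          (fun K => I ∪ J' ⊆ K)).card ≤
        (if j + i ≤ k + z then n.choose (k + z - j - i) else 0) := by
      intro J' hJ'
      rw [Finset.mem_filter] at hJ'
      have hcard : (I ∪ J').card + z = i + j := by
        have := Finset.card_union_add_card_inter I J'
        rw [hJ'.2, hZ.2, hI, h𝒢 _ hJ'.1] at this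
        omega
      by_cases hc : j + i ≤ k + z
      · rw [if_pos hc]
        have := card_supersets (I ∪ J') k (V := V)
        have he : k - (I ∪ J').card = k + z - j - i := by omega
        rw [he, hn] at this
        exact this
      · rw [if_neg hc]
        have : ((Finset.powersetCard k (Finset.univ : Finset V)).filter
            (fun K => I ∪ J' ⊆ K)) = ∅ := by
          rw [Finset.filter_eq_empty_iff]
          intro K hK hsub'
          rw [Finset.mem_powersetCard] at hK
          have := Finset.card_le_card hsub'
          omega
        rw [this]
        simp
    refine le_trans (Finset.sum_le_sum hinner) ?_
    rw [Finset.sum_const, smul_eq_mul]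
    apply Nat.mul_le_mul_right
    have h1 : 𝒢.filter (fun J' => I ∩ J' = Z) ⊆ 𝒢.filter (fun J' => Z ⊆ J') := by
      intro J' hJ'
      rw [Finset.mem_filter] at hJ' ⊢
      exact ⟨hJ'.1, hJ'.2 ▸ Finset.inter_subset_right⟩
    refine le_trans (Finset.card_le_card h1) ?_
    exact Finset.le_sup (f := fun Z => (𝒢.filter fun J => Z ⊆ J).card)
      (Finset.mem_powersetCard.2 ⟨Finset.subset_univ _, hZ.2⟩)
  refine le_trans (Finset.sum_le_sum hZbound) ?_
  rw [Finset.sum_const, smul_eq_mul, Finset.card_powersetCard, hI, mul_assoc]
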